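/- Let p be a prime number, Λ = Z_p[[S,T]] the formal power series ring in two variables over the p-adic integers Z_p, and λ ≥ 1 an integer. Let M be a cyclic Λ-module with no non-trivial pseudo-null Λ-submodule such that M/SM is a free Z_p-module of rank λ, and suppose f(S,T) = T^λ + g_{λ−1}(S)·T^{λ−1} + … + g_1(S)·T + g_0(S), with g_i(S) ∈ Z_p[[S]], annihilates M. Then M is isomorphic to Λ/f(S,T)Λ as a Λ-module. -/

import Mathlib

set_option maxHeartbeats 1000000
set_option synthInstance.maxHeartbeats 400000

open PowerSeries

/-- `Λ = ℤ_p[[S,T]]`, realized as the iterated power series ring `(ℤ_p[[S]])[[T]]`. -/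
noncomputable abbrev Lambda (p : ℕ) [Fact p.Prime] : Type := PowerSeries (PowerSeries ℤ_[p])

/-- The variable `S` of `Λ`: the inner power-series variable, embedded via `C`. -/
noncomputable abbrev Svar (p : ℕ) [Fact p.Prime] : Lambda p :=
  PowerSeries.C (R := PowerSeries ℤ_[p]) PowerSeries.X

/-- The variable `T` of `Λ`: the outer power-series variable. -/
noncomputable abbrev Tvar (p : ℕ) [Fact p.Prime] : Lambda p := PowerSeries.X

namespace Stmt6

variable {p : ℕ} [Fact p.Prime]

lemma norm_p_pow' (k : ℕ) : ‖(p : ℤ_[p]) ^ k‖ = ((p : ℝ)⁻¹) ^ k := by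
  rw [PadicInt.norm_p_pow, inv_pow, ← zpow_natCast (p:ℝ), ← zpow_neg]

noncomputable def psum (p : ℕ) [Fact p.Prime] (z : ℕ → ℤ_[p]) : ℤ_[p] :=
  ∑' k, (p : ℤ_[p]) ^ k * z k

lemma psum_summable (z : ℕ → ℤ_[p]) : Summable (fun k => (p : ℤ_[p]) ^ k * z k) := by
  apply Summable.of_norm_bounded (g := fun k => ((p : ℝ)⁻¹) ^ k)
  · apply summable_geometric_of_lt_one (by positivity)
    have hp : 1 < (p : ℝ) := by exact_mod_cast (Fact.out : p.Prime).one_lt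
    rw [inv_lt_one_iff₀]; right; exact hp
  · intro k
    calc ‖(p : ℤ_[p]) ^ k * z k‖ ≤ ‖(p : ℤ_[p]) ^ k‖ * ‖z k‖ := norm_mul_le _ _
    _ ≤ ‖(p : ℤ_[p]) ^ k‖ * 1 := by
        exact mul_le_mul_of_nonneg_left (PadicInt.norm_le_one _) (norm_nonneg _)
    _ = ((p : ℝ)⁻¹) ^ k := by rw [mul_one, norm_p_pow']

lemma psum_succ (z : ℕ → ℤ_[p]) :
    psum p z = z 0 + (p : ℤ_[p]) * psum p (fun k => z (k + 1)) := by
  unfold psum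
  rw [Summable.tsum_eq_zero_add (psum_summable z)]
  simp only [pow_zero, one_mul]
  congr 1
  rw [← (psum_summable (fun k => z (k+1))).tsum_mul_left ((p : ℤ_[p]))]
  exact tsum_congr fun k => by ring

lemma psum_partial (z : ℕ → ℤ_[p]) (N : ℕ) :
    psum p z = (∑ k ∈ Finset.range N, (p : ℤ_[p]) ^ k * z k)
      + (p : ℤ_[p]) ^ N * psum p (fun k => z (N + k)) := by
  induction N with
  | zero => simp
  | succ N ih =>
      rw [ih, psum_succ (fun k => z (N + k)), Finset.sum_range_succ]
      have : (fun k => z (N + (k + 1))) = fun k => z (N + 1 + k) := by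
        funext k; congr 1; omega
      rw [this]
      ring_nf

lemma padicInt_eq_zero_of_forall (x : ℤ_[p]) (h : ∀ N, ∃ y, x = (p : ℤ_[p]) ^ N * y) :
    x = 0 := by
  have hb : ∀ N : ℕ, ‖x‖ ≤ ((p : ℝ)⁻¹) ^ N := by
    intro N
    obtain ⟨y, hy⟩ := h N
    rw [hy]
    calc ‖(p : ℤ_[p]) ^ N * y‖ ≤ ‖(p : ℤ_[p]) ^ N‖ * ‖y‖ := norm_mul_le _ _
    _ ≤ ‖(p : ℤ_[p]) ^ N‖ * 1 :=
        mul_le_mul_of_nonneg_left (PadicInt.norm_le_one _) (norm_nonneg _)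
    _ = ((p : ℝ)⁻¹) ^ N := by rw [mul_one, norm_p_pow']
  have hlim : Filter.Tendsto (fun N : ℕ => ((p : ℝ)⁻¹) ^ N) Filter.atTop (nhds 0) := by
    apply tendsto_pow_atTop_nhds_zero_of_lt_one (by positivity)
    have hp : 1 < (p : ℝ) := by exact_mod_cast (Fact.out : p.Prime).one_lt
    rw [inv_lt_one_iff₀]; right; exact hp
  have : ‖x‖ ≤ 0 := ge_of_tendsto hlim (Filter.Eventually.of_forall hb)
  simpa using le_antisymm this (norm_nonneg x)


/-- double coefficient -/
noncomputable def c2 (p : ℕ) [Fact p.Prime] (n m : ℕ) (a : Lambda p) : ℤ_[p] :=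
  PowerSeries.coeff (R := ℤ_[p]) m (PowerSeries.coeff (R := PowerSeries ℤ_[p]) n a)

lemma ext2 {a b : Lambda p} (h : ∀ n m, c2 p n m a = c2 p n m b) : a = b :=
  PowerSeries.ext fun n => PowerSeries.ext fun m => h n m

lemma c2_CC_mul (n m : ℕ) (r : ℤ_[p]) (a : Lambda p) :
    c2 p n m (PowerSeries.C (PowerSeries.C (R := ℤ_[p]) r) * a) = r * c2 p n m a := by
  rw [c2, c2, PowerSeries.coeff_C_mul, PowerSeries.coeff_C_mul]

lemma c2_add (n m : ℕ) (a b : Lambda p) : c2 p n m (a + b) = c2 p n m a + c2 p n m b := by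
  simp [c2]

lemma c2_sub (n m : ℕ) (a b : Lambda p) : c2 p n m (a - b) = c2 p n m a - c2 p n m b := by
  simp [c2]

lemma natCast_eq (k : ℕ) : (k : Lambda p) = PowerSeries.C (PowerSeries.C (R := ℤ_[p]) (k : ℤ_[p])) := by
  rw [map_natCast, map_natCast]

lemma c2_p_mul (n m : ℕ) (a : Lambda p) :
    c2 p n m ((p : Lambda p) * a) = (p : ℤ_[p]) * c2 p n m a := by
  rw [natCast_eq, c2_CC_mul]

lemma c2_p_pow_mul (N n m : ℕ) (a : Lambda p) :
    c2 p n m ((p : Lambda p) ^ N * a) = (p : ℤ_[p]) ^ N * c2 p n m a := by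
  have h1 : (p : Lambda p) ^ N = PowerSeries.C (PowerSeries.C (R := ℤ_[p]) ((p : ℤ_[p]) ^ N)) := by
    rw [natCast_eq, ← map_pow, ← map_pow]
  rw [h1, c2_CC_mul]

lemma padic_sep (z : Lambda p) (h : ∀ N, ∃ w, z = (p : Lambda p) ^ N * w) : z = 0 := by
  apply ext2
  intro n m
  simp only [c2, map_zero]
  apply padicInt_eq_zero_of_forall
  intro N
  obtain ⟨w, hw⟩ := h N
  exact ⟨c2 p n m w, by rw [hw]; exact c2_p_pow_mul N n m w⟩

lemma X_sep (g : PowerSeries ℤ_[p]) (h : ∀ N, ∃ u, g = PowerSeries.X ^ N * u) : g = 0 := by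
  refine PowerSeries.ext fun m => ?_
  obtain ⟨u, hu⟩ := h (m + 1)
  rw [map_zero]
  exact PowerSeries.X_pow_dvd_iff.mp ⟨u, hu⟩ m (Nat.lt_succ_self m)

lemma sadic_sep (z : Lambda p) (h : ∀ N, ∃ w, z = Svar p ^ N * w) : z = 0 := by
  refine PowerSeries.ext fun n => ?_
  rw [map_zero]
  apply X_sep
  intro N
  obtain ⟨w, hw⟩ := h N
  refine ⟨PowerSeries.coeff n w, ?_⟩
  rw [hw, Svar, ← map_pow, PowerSeries.coeff_C_mul]

/-- `Psum c = ∑ p^k c k` (p-adically convergent sum). -/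
noncomputable def Psum (c : ℕ → Lambda p) : Lambda p :=
  PowerSeries.mk fun n => PowerSeries.mk fun m => psum p fun k => c2 p n m (c k)

lemma c2_Psum (n m : ℕ) (c : ℕ → Lambda p) :
    c2 p n m (Psum c) = psum p fun k => c2 p n m (c k) := by
  simp [Psum, c2, PowerSeries.coeff_mk]

lemma Psum_succ (c : ℕ → Lambda p) :
    Psum c = c 0 + (p : Lambda p) * Psum (fun k => c (k + 1)) := by
  apply ext2
  intro n m
  rw [c2_Psum, c2_add, c2_p_mul, c2_Psum, psum_succ]

lemma Psum_partial (c : ℕ → Lambda p) (N : ℕ) :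
    Psum c = (∑ k ∈ Finset.range N, (p : Lambda p) ^ k * c k)
      + (p : Lambda p) ^ N * Psum (fun k => c (N + k)) := by
  induction N with
  | zero => simp
  | succ N ih =>
      rw [ih, Psum_succ (fun k => c (N + k)), Finset.sum_range_succ]
      have : (fun k => c (N + (k + 1))) = fun k => c (N + 1 + k) := by
        funext k; exact congrArg c (by omega)
      rw [this]
      simp only [Nat.add_zero]
      rw [pow_succ]
      ring

/-- `Csum c = ∑ S^k c k` (S-adically convergent sum); fully explicit coefficients. -/
noncomputable def Csum (c : ℕ → Lambda p) : Lambda p :=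
  PowerSeries.mk fun n => PowerSeries.mk fun m =>
    ∑ k ∈ Finset.range (m + 1), c2 p n (m - k) (c k)

lemma c2_Csum (c : ℕ → Lambda p) (n m : ℕ) :
    c2 p n m (Csum c) = ∑ k ∈ Finset.range (m + 1), c2 p n (m - k) (c k) := by
  simp [Csum, c2, PowerSeries.coeff_mk]

lemma c2_Svar_mul (n m : ℕ) (a : Lambda p) :
    c2 p n m (Svar p * a) = if m = 0 then 0 else c2 p n (m - 1) a := by
  rw [c2, c2, Svar, PowerSeries.coeff_C_mul]
  cases m with
  | zero => simp [PowerSeries.coeff_zero_eq_constantCoeff]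
  | succ m => simp [PowerSeries.coeff_succ_X_mul]

lemma Csum_succ (c : ℕ → Lambda p) :
    Csum c = c 0 + Svar p * Csum (fun k => c (k + 1)) := by
  apply ext2
  intro n m
  rw [c2_add, c2_Svar_mul, c2_Csum]
  cases m with
  | zero => simp
  | succ m =>
      rw [Finset.sum_range_succ']
      have : ∀ k ∈ Finset.range (m + 1), c2 p n (m + 1 - (k + 1)) (c (k + 1))
          = c2 p n (m - k) (c (k + 1)) := by
        intro k _; rw [Nat.succ_sub_succ]
      rw [Finset.sum_congr rfl this]
      simp only [Nat.sub_zero, if_neg (Nat.succ_ne_zero m), Nat.add_sub_cancel]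
      rw [add_comm, c2_Csum]

lemma Csum_geom (f' : Lambda p) (z c : ℕ → Lambda p)
    (hrec : ∀ k, z k = c k * f' + Svar p * z (k + 1)) :
    z 0 = Csum c * f' := by
  have key : ∀ N, z 0 - Csum c * f'
      = Svar p ^ N * (z N - Csum (fun k => c (N + k)) * f') := by
    intro N
    induction N with
    | zero =>
        have : (fun k => c (0 + k)) = c := by funext k; simp
        rw [this]; simp
    | succ N ih =>
        rw [ih, hrec N]
        have h2 : Csum (fun k => c (N + k)) = c N + Svar p * Csum (fun k => c (N + 1 + k)) := by
          rw [Csum_succ (fun k => c (N + k))]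
          have : (fun k => c (N + (k + 1))) = fun k => c (N + 1 + k) := by
            funext k; exact congrArg c (by omega)
          rw [this]; simp
        rw [h2]
        ring
  have : ∀ N, ∃ w, z 0 - Csum c * f' = Svar p ^ N * w := fun N => ⟨_, key N⟩
  exact sub_eq_zero.mp (sadic_sep _ this)


/-- `C (C z)` : the constant embedding of `ℤ_[p]` into `Λ`. -/
noncomputable def CC (p : ℕ) [Fact p.Prime] (z : ℤ_[p]) : Lambda p :=
  PowerSeries.C (R := PowerSeries ℤ_[p]) (PowerSeries.C (R := ℤ_[p]) z)

lemma Psum_geom (f' : Lambda p) (a q w r : ℕ → Lambda p)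
    (hrec : ∀ k, a k = q k * f' + Svar p * w k + r k + (p : Lambda p) * a (k + 1)) :
    a 0 = Psum q * f' + Svar p * Psum w + Psum r := by
  have hsh : ∀ (x : ℕ → Lambda p) (N : ℕ),
      (fun k => x (N + (k + 1))) = fun k => x (N + 1 + k) := by
    intro x N; funext k; exact congrArg x (by omega)
  have h0 : ∀ (x : ℕ → Lambda p), (fun k => x (0 + k)) = x := by
    intro x; funext k; exact congrArg x (Nat.zero_add k)
  have key : ∀ N, a 0 - (Psum q * f' + Svar p * Psum w + Psum r)
      = (p : Lambda p) ^ N * (a N - (Psum (fun k => q (N + k)) * f'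
          + Svar p * Psum (fun k => w (N + k)) + Psum (fun k => r (N + k)))) := by
    intro N
    induction N with
    | zero => rw [h0, h0, h0]; simp
    | succ N ih =>
        rw [ih, hrec N,
          Psum_succ (fun k => q (N + k)), Psum_succ (fun k => w (N + k)),
          Psum_succ (fun k => r (N + k)), hsh q N, hsh w N, hsh r N]
        simp only [Nat.add_zero]
        rw [pow_succ]
        ring
  exact sub_eq_zero.mp (padic_sep _ fun N => ⟨_, key N⟩)

lemma psum_sum {ι : Type*} (s : Finset ι) (h : ι → ℕ → ℤ_[p]) :
    psum p (fun k => ∑ i ∈ s, h i k) = ∑ i ∈ s, psum p (h i) := by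
  unfold psum
  rw [← Summable.tsum_finsetSum (fun i _ => psum_summable (h i))]
  exact tsum_congr fun k => by rw [Finset.mul_sum]

lemma psum_zero : psum p (fun _ => 0) = 0 := by
  simp [psum]

lemma c2_sum {ι : Type*} (s : Finset ι) (F : ι → Lambda p) (n m : ℕ) :
    c2 p n m (∑ i ∈ s, F i) = ∑ i ∈ s, c2 p n m (F i) := by
  simp [c2]

lemma c2_CC_mul_pow (n m i : ℕ) (z : ℤ_[p]) :
    c2 p n m (CC p z * Tvar p ^ i) = if n = i ∧ m = 0 then z else 0 := by
  rw [CC, c2, PowerSeries.coeff_C_mul, PowerSeries.coeff_X_pow]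
  by_cases hn : n = i
  · simp [hn, PowerSeries.coeff_C]
  · simp [hn]

lemma Psum_comb (lam : ℕ) (ρ : ℕ → Fin lam → ℤ_[p]) :
    Psum (fun k => ∑ i : Fin lam, CC p (ρ k i) * Tvar p ^ (i : ℕ))
      = ∑ i : Fin lam, CC p (psum p fun k => ρ k i) * Tvar p ^ (i : ℕ) := by
  apply ext2
  intro n m
  rw [c2_Psum, c2_sum]
  have hL : (fun k => c2 p n m (∑ i : Fin lam, CC p (ρ k i) * Tvar p ^ (i : ℕ)))
      = fun k => ∑ i : Fin lam, (if n = (i : ℕ) ∧ m = 0 then ρ k i else 0) := by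
    funext k
    rw [c2_sum]
    exact Finset.sum_congr rfl fun i _ => c2_CC_mul_pow n m i (ρ k i)
  rw [hL, psum_sum]
  refine Finset.sum_congr rfl fun i _ => ?_
  rw [c2_CC_mul_pow]
  by_cases hc : n = (i : ℕ) ∧ m = 0
  · simp only [if_pos hc]
  · simp only [if_neg hc]
    simpa using psum_zero (p := p)


/-- reduction `Λ → (ℤ/p)[[T]]` killing `S` and `p`. -/
noncomputable def redp (p : ℕ) [Fact p.Prime] : Lambda p →+* PowerSeries (ZMod p) :=
  PowerSeries.map ((PadicInt.toZMod).comp (PowerSeries.constantCoeff (R := ℤ_[p])))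

lemma redp_coeff (a : Lambda p) (n : ℕ) :
    PowerSeries.coeff n (redp p a)
      = PadicInt.toZMod (PowerSeries.constantCoeff (R := ℤ_[p]) (PowerSeries.coeff n a)) := by
  rw [redp, PowerSeries.coeff_map]; rfl

lemma redp_X : redp p (Tvar p) = PowerSeries.X := PowerSeries.map_X _

lemma redp_CC (z : ℤ_[p]) : redp p (CC p z) = PowerSeries.C (PadicInt.toZMod z) := by
  rw [CC, redp, PowerSeries.map_C]
  rfl

/-- coefficientwise lift `(ℤ/p)[[T]] → Λ`. -/
noncomputable def liftS (p : ℕ) [Fact p.Prime] (u : PowerSeries (ZMod p)) : Lambda p :=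
  PowerSeries.mk fun n => PowerSeries.C (R := ℤ_[p]) (ZMod.cast (PowerSeries.coeff n u) : ℤ_[p])

lemma redp_liftS (u : PowerSeries (ZMod p)) : redp p (liftS p u) = u := by
  refine PowerSeries.ext fun n => ?_
  rw [redp_coeff, liftS, PowerSeries.coeff_mk, PowerSeries.constantCoeff_C]
  exact ZMod.ringHom_map_cast _ _

/-- division with remainder in `(ℤ/p)[[T]]` by a series whose `lam`-th coefficient is `1`. -/
lemma zmod_division (lam : ℕ) (fb : PowerSeries (ZMod p))
    (hfb : PowerSeries.coeff lam fb = 1) (a : PowerSeries (ZMod p)) :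
    ∃ (q : PowerSeries (ZMod p)) (ρ : Fin lam → ZMod p),
      a = q * fb + ∑ i : Fin lam, PowerSeries.C (ρ i) * PowerSeries.X ^ (i : ℕ) := by
  have hex : ∃ n, PowerSeries.coeff (R := ZMod p) n fb ≠ 0 := ⟨lam, by rw [hfb]; exact one_ne_zero⟩
  set d := Nat.find hex with hd_def
  have hd : PowerSeries.coeff (R := ZMod p) d fb ≠ 0 := Nat.find_spec hex
  have hdlam : d ≤ lam := Nat.find_le (by rw [hfb]; exact one_ne_zero)
  have hlow : ∀ j < d, PowerSeries.coeff (R := ZMod p) j fb = 0 := by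
    intro j hj
    by_contra hne
    exact Nat.find_min hex hj hne
  obtain ⟨v, hv⟩ : (PowerSeries.X : PowerSeries (ZMod p)) ^ d ∣ fb :=
    PowerSeries.X_pow_dvd_iff.mpr hlow
  have hv0 : PowerSeries.constantCoeff (R := ZMod p) v ≠ 0 := by
    intro h0
    apply hd
    rw [hv]
    have h1 := PowerSeries.coeff_X_pow_mul v d 0
    rw [zero_add] at h1
    rw [h1, PowerSeries.coeff_zero_eq_constantCoeff, h0]
  have hvunit : IsUnit v := PowerSeries.isUnit_iff_constantCoeff.mpr (isUnit_iff_ne_zero.mpr hv0)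
  obtain ⟨vu, hvu⟩ := hvunit
  set ρ : Fin lam → ZMod p := fun i => if (i : ℕ) < d then PowerSeries.coeff (i : ℕ) a else 0
    with hρ_def
  set r : PowerSeries (ZMod p) := ∑ i : Fin lam, PowerSeries.C (ρ i) * PowerSeries.X ^ (i : ℕ)
    with hr_def
  have hcoeff_r : ∀ j < d, PowerSeries.coeff (R := ZMod p) j r = PowerSeries.coeff (R := ZMod p) j a := by
    intro j hj
    have hjlam : j < lam := lt_of_lt_of_le hj hdlam
    rw [hr_def, map_sum]
    rw [Finset.sum_eq_single (⟨j, hjlam⟩ : Fin lam)]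
    · simp [ρ, hj, PowerSeries.coeff_C_mul, PowerSeries.coeff_X_pow]
    · intro i _ hne
      rw [PowerSeries.coeff_C_mul, PowerSeries.coeff_X_pow, if_neg, mul_zero]
      intro hji
      exact hne (by ext; simp [← hji])
    · intro h; exact absurd (Finset.mem_univ _) h
  obtain ⟨w, hw⟩ : (PowerSeries.X : PowerSeries (ZMod p)) ^ d ∣ (a - r) := by
    apply PowerSeries.X_pow_dvd_iff.mpr
    intro j hj
    rw [map_sub, hcoeff_r j hj, sub_self]
  refine ⟨w * (↑vu⁻¹ : PowerSeries (ZMod p)), ρ, ?_⟩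
  rw [← hr_def]
  have : w * ↑vu⁻¹ * fb = a - r := by
    rw [hv, ← hvu]
    calc w * ↑vu⁻¹ * (PowerSeries.X ^ d * ↑vu)
        = PowerSeries.X ^ d * w * (↑vu⁻¹ * ↑vu) := by ring
    _ = PowerSeries.X ^ d * w := by rw [vu.inv_mul, mul_one]
    _ = a - r := hw.symm
  rw [this]
  ring

lemma redp_zero_decomp (ε : Lambda p) (hε : redp p ε = 0) :
    ∃ w B, ε = Svar p * w + (p : Lambda p) * B := by
  have h1 : ∀ n, ∃ β : ℤ_[p],
      PowerSeries.constantCoeff (R := ℤ_[p]) (PowerSeries.coeff n ε) = (p : ℤ_[p]) * β := by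
    intro n
    have h0 : PadicInt.toZMod (PowerSeries.constantCoeff (R := ℤ_[p]) (PowerSeries.coeff n ε)) = 0 := by
      rw [← redp_coeff, hε, map_zero]
    have : PowerSeries.constantCoeff (R := ℤ_[p]) (PowerSeries.coeff n ε)
        ∈ RingHom.ker (PadicInt.toZMod : ℤ_[p] →+* ZMod p) := h0
    rw [PadicInt.ker_toZMod, PadicInt.maximalIdeal_eq_span_p, Ideal.mem_span_singleton] at this
    obtain ⟨β, hβ⟩ := this
    exact ⟨β, hβ⟩
  choose β hβ using h1
  have h2 : ∀ n, ∃ wn : PowerSeries ℤ_[p],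
      PowerSeries.coeff n ε - PowerSeries.C (R := ℤ_[p]) ((p : ℤ_[p]) * β n) = PowerSeries.X * wn := by
    intro n
    apply PowerSeries.X_dvd_iff.mpr
    rw [map_sub, PowerSeries.constantCoeff_C, hβ, sub_self]
  choose wn hwn using h2
  refine ⟨PowerSeries.mk wn, PowerSeries.mk (fun n => PowerSeries.C (R := ℤ_[p]) (β n)), ?_⟩
  refine PowerSeries.ext fun n => ?_
  rw [map_add]
  have e1 : PowerSeries.coeff n (Svar p * PowerSeries.mk wn) = PowerSeries.X * wn n := by
    rw [Svar, PowerSeries.coeff_C_mul, PowerSeries.coeff_mk]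
  have e2 : PowerSeries.coeff n ((p : Lambda p) * PowerSeries.mk
      (fun n => PowerSeries.C (R := ℤ_[p]) (β n))) = PowerSeries.C (R := ℤ_[p]) ((p : ℤ_[p]) * β n) := by
    rw [natCast_eq, PowerSeries.coeff_C_mul, PowerSeries.coeff_mk, ← map_mul]
  rw [e1, e2]
  have h := hwn n
  rw [sub_eq_iff_eq_add] at h
  rw [h]


/-- the annihilating element `f(S,T)`. -/
noncomputable def fEl (p lam : ℕ) [Fact p.Prime] (g : Fin lam → PowerSeries ℤ_[p]) : Lambda p :=
  Tvar p ^ lam + ∑ i : Fin lam, PowerSeries.C (R := PowerSeries ℤ_[p]) (g i) * Tvar p ^ (i : ℕ)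

lemma coeff_fEl_lam (lam : ℕ) (g : Fin lam → PowerSeries ℤ_[p]) :
    PowerSeries.coeff lam (fEl p lam g) = 1 := by
  rw [fEl, map_add, map_sum, PowerSeries.coeff_X_pow_self]
  rw [Finset.sum_eq_zero, add_zero]
  intro i _
  rw [PowerSeries.coeff_C_mul, PowerSeries.coeff_X_pow, if_neg (Nat.ne_of_gt i.2), mul_zero]

lemma coeff_redp_fEl (lam : ℕ) (g : Fin lam → PowerSeries ℤ_[p]) :
    PowerSeries.coeff lam (redp p (fEl p lam g)) = 1 := by
  rw [redp_coeff, coeff_fEl_lam]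
  simp

lemma base_step (lam : ℕ) (g : Fin lam → PowerSeries ℤ_[p]) (a : Lambda p) :
    ∃ (q w B : Lambda p) (ρ : Fin lam → ℤ_[p]),
      a = q * fEl p lam g + Svar p * w
        + (∑ i : Fin lam, CC p (ρ i) * Tvar p ^ (i : ℕ)) + (p : Lambda p) * B := by
  obtain ⟨qb, ρb, hq⟩ := zmod_division lam (redp p (fEl p lam g)) (coeff_redp_fEl lam g)
    (redp p a)
  set q := liftS p qb with hqdef
  set ρ : Fin lam → ℤ_[p] := fun i => (ZMod.cast (ρb i) : ℤ_[p]) with hρdef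
  set r : Lambda p := ∑ i : Fin lam, CC p (ρ i) * Tvar p ^ (i : ℕ) with hrdef
  have hredr : redp p r = ∑ i : Fin lam, PowerSeries.C (ρb i) * PowerSeries.X ^ (i : ℕ) := by
    rw [hrdef, map_sum]
    refine Finset.sum_congr rfl fun i _ => ?_
    rw [map_mul, redp_CC, map_pow, redp_X, hρdef]
    congr 2
    exact ZMod.ringHom_map_cast _ _
  have hε : redp p (a - (q * fEl p lam g + r)) = 0 := by
    rw [map_sub, map_add, map_mul, hqdef, redp_liftS, hredr, ← hq, sub_self]
  obtain ⟨w, B, hwB⟩ := redp_zero_decomp _ hε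
  refine ⟨q, w, B, ρ, ?_⟩
  rw [sub_eq_iff_eq_add] at hwB
  rw [hwB]
  ring

lemma division (lam : ℕ) (g : Fin lam → PowerSeries ℤ_[p]) (a : Lambda p) :
    ∃ (Qe We : Lambda p) (ρ : Fin lam → ℤ_[p]),
      a = Qe * fEl p lam g + Svar p * We
        + ∑ i : Fin lam, CC p (ρ i) * Tvar p ^ (i : ℕ) := by
  choose Qf Wf Bf Pf heq using base_step (p := p) lam g
  let aseq : ℕ → Lambda p := fun k => Nat.rec a (fun _ prev => Bf prev) k
  have hrec : ∀ k, aseq k = Qf (aseq k) * fEl p lam g + Svar p * Wf (aseq k)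
      + (∑ i : Fin lam, CC p (Pf (aseq k) i) * Tvar p ^ (i : ℕ))
      + (p : Lambda p) * aseq (k + 1) := fun k => heq (aseq k)
  have hmain := Psum_geom (fEl p lam g) aseq (fun k => Qf (aseq k)) (fun k => Wf (aseq k))
      (fun k => ∑ i : Fin lam, CC p (Pf (aseq k) i) * Tvar p ^ (i : ℕ)) hrec
  rw [Psum_comb lam (fun k => Pf (aseq k))] at hmain
  exact ⟨_, _, _, hmain⟩


lemma smul_eq_CC_mul (z : ℤ_[p]) (w : Lambda p) : z • w = CC p z * w := by
  rw [Algebra.smul_def, CC]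
  congr 1
  rw [PowerSeries.algebraMap_apply, PowerSeries.algebraMap_apply]
  simp

lemma X_not_unit : ¬ IsUnit (PowerSeries.X : PowerSeries ℤ_[p]) :=
  PowerSeries.X_prime.not_unit

lemma relprime (lam : ℕ) (g : Fin lam → PowerSeries ℤ_[p]) :
    IsRelPrime (Svar p) (fEl p lam g) := by
  intro d hdS hdF
  obtain ⟨e, he⟩ := hdS
  have hcc : (PowerSeries.X : PowerSeries ℤ_[p])
      = PowerSeries.constantCoeff d * PowerSeries.constantCoeff e := by
    have := congrArg (PowerSeries.constantCoeff (R := PowerSeries ℤ_[p])) he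
    rw [map_mul] at this
    rw [← this, Svar, PowerSeries.constantCoeff_C]
  rcases (PowerSeries.X_irreducible).isUnit_or_isUnit hcc with hud | hue
  · exact PowerSeries.isUnit_iff_constantCoeff.mpr hud
  · exfalso
    have heu : IsUnit e := PowerSeries.isUnit_iff_constantCoeff.mpr hue
    obtain ⟨eu, heu'⟩ := heu
    have hSd : Svar p ∣ d := by
      refine ⟨(↑eu⁻¹ : Lambda p), ?_⟩
      rw [he, ← heu', mul_assoc, Units.mul_inv, mul_one]
    obtain ⟨u, hu⟩ : Svar p ∣ fEl p lam g := dvd_trans hSd hdF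
    have h1 : (1 : PowerSeries ℤ_[p]) = PowerSeries.X * PowerSeries.coeff lam u := by
      rw [← coeff_fEl_lam lam g, hu, Svar, PowerSeries.coeff_C_mul]
    exact X_not_unit (IsUnit.of_mul_eq_one _ h1.symm)

end Stmt6


open Stmt6 in
/-- Let `λ ≥ 1` and let `M` be a cyclic `Λ`-module with no non-trivial
pseudo-null submodule such that `M/SM` is free of rank `λ` over `ℤ_p`, annihilated by
`f(S,T) = T^λ + g_{λ-1}(S)·T^{λ-1} + ⋯ + g₀(S)` with `gᵢ ∈ ℤ_p[[S]]`.
Then `M ≅ Λ/f(S,T)Λ` as `Λ`-modules. -/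
theorem cyclic_module_iso_quotient (p : ℕ) [Fact p.Prime] (lam : ℕ) (hlam : 1 ≤ lam)
    (M : Type*) [AddCommGroup M] [Module (Lambda p) M]
    [Module ℤ_[p] M] [IsScalarTower ℤ_[p] (Lambda p) M]
    (hcyc : ∃ x : M, Submodule.span (Lambda p) {x} = ⊤)
    (hpn : ∀ N : Submodule (Lambda p) M,
      (∃ a b : Lambda p, IsRelPrime a b ∧ (∀ x ∈ N, a • x = 0) ∧ (∀ x ∈ N, b • x = 0)) →
        N = ⊥)
    (bQ : Module.Basis (Fin lam) ℤ_[p]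
      (M ⧸ ((Ideal.span {Svar p}) • (⊤ : Submodule (Lambda p) M))))
    (g : Fin lam → PowerSeries ℤ_[p])
    (hann : ∀ m : M,
      ((Tvar p) ^ lam
          + ∑ i : Fin lam, PowerSeries.C (R := PowerSeries ℤ_[p]) (g i) * (Tvar p) ^ (i : ℕ)) • m
        = 0) :
    Nonempty (M ≃ₗ[Lambda p]
      (Lambda p ⧸ Ideal.span
        {(Tvar p) ^ lam
          + ∑ i : Fin lam, PowerSeries.C (R := PowerSeries ℤ_[p]) (g i) * (Tvar p) ^ (i : ℕ)})) := by
  show Nonempty (M ≃ₗ[Lambda p] (Lambda p ⧸ Ideal.span {fEl p lam g}))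
  obtain ⟨x, hx⟩ := hcyc
  set f := fEl p lam g with hfdef
  have hannF : ∀ m : M, f • m = 0 := hann
  -- no S-torsion
  have htf : ∀ m : M, Svar p • m = 0 → m = 0 := by
    intro m hm
    have hN := hpn (LinearMap.ker (LinearMap.lsmul (Lambda p) M (Svar p)))
      ⟨Svar p, f, relprime lam g,
        fun y hy => by
          rw [LinearMap.mem_ker, LinearMap.lsmul_apply] at hy; exact hy,
        fun y _ => hannF y⟩
    have hmem : m ∈ LinearMap.ker (LinearMap.lsmul (Lambda p) M (Svar p)) := by
      rw [LinearMap.mem_ker, LinearMap.lsmul_apply]; exact hm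
    rw [hN] at hmem
    exact (Submodule.mem_bot _).mp hmem
  set J : Ideal (Lambda p) := Ideal.span {f} ⊔ Ideal.span {Svar p} with hJdef
  set JZ : Submodule ℤ_[p] (Lambda p) := Submodule.restrictScalars ℤ_[p] J with hJZdef
  set SM : Submodule (Lambda p) M := (Ideal.span {Svar p}) • (⊤ : Submodule (Lambda p) M)
    with hSMdef
  let toQ : Lambda p →ₗ[ℤ_[p]] M ⧸ SM :=
    { toFun := fun a => Submodule.Quotient.mk (a • x)
      map_add' := fun a b => by
        show Submodule.Quotient.mk ((a + b) • x)
            = Submodule.Quotient.mk (a • x) + Submodule.Quotient.mk (b • x)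
        rw [add_smul, Submodule.Quotient.mk_add]
      map_smul' := fun z a => by
        show Submodule.Quotient.mk ((z • a) • x) = z • Submodule.Quotient.mk (a • x)
        rw [smul_assoc, Submodule.Quotient.mk_smul] }
  have htoQ : ∀ a : Lambda p, toQ a = Submodule.Quotient.mk (a • x) := fun a => rfl
  -- J is killed by toQ
  have hJker : ∀ a ∈ JZ, toQ a = 0 := by
    intro a ha
    rw [hJZdef, Submodule.restrictScalars_mem, hJdef] at ha
    obtain ⟨u, hu, v, hv, rfl⟩ := Submodule.mem_sup.mp ha
    obtain ⟨c, rfl⟩ := Ideal.mem_span_singleton'.mp hu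
    obtain ⟨c', rfl⟩ := Ideal.mem_span_singleton'.mp hv
    rw [htoQ, Submodule.Quotient.mk_eq_zero]
    have h1 : (c * f + c' * Svar p) • x = Svar p • (c' • x) := by
      rw [add_smul, mul_smul, hannF, smul_zero, zero_add, mul_comm, mul_smul]
    rw [h1]
    exact Submodule.smul_mem_smul (Ideal.subset_span rfl) trivial
  let piJ : (Lambda p ⧸ JZ) →ₗ[ℤ_[p]] M ⧸ SM :=
    Submodule.liftQ JZ toQ (fun a ha => LinearMap.mem_ker.mpr (hJker a ha))
  let sig : (Fin lam → ℤ_[p]) →ₗ[ℤ_[p]] (Lambda p ⧸ JZ) :=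
    { toFun := fun v => Submodule.Quotient.mk (∑ i : Fin lam, CC p (v i) * Tvar p ^ (i : ℕ))
      map_add' := fun v w => by
        have hsum : (∑ i : Fin lam, CC p ((v + w) i) * Tvar p ^ (i : ℕ))
            = (∑ i : Fin lam, CC p (v i) * Tvar p ^ (i : ℕ))
              + ∑ i : Fin lam, CC p (w i) * Tvar p ^ (i : ℕ) := by
          rw [← Finset.sum_add_distrib]
          refine Finset.sum_congr rfl fun i _ => ?_
          rw [Pi.add_apply, CC, CC, CC, map_add, map_add, add_mul]
        show Submodule.Quotient.mk (∑ i : Fin lam, CC p ((v + w) i) * Tvar p ^ (i : ℕ))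
            = Submodule.Quotient.mk (∑ i : Fin lam, CC p (v i) * Tvar p ^ (i : ℕ))
              + Submodule.Quotient.mk (∑ i : Fin lam, CC p (w i) * Tvar p ^ (i : ℕ))
        rw [hsum, Submodule.Quotient.mk_add]
      map_smul' := fun z v => by
        have hsum : (∑ i : Fin lam, CC p ((z • v) i) * Tvar p ^ (i : ℕ))
            = z • ∑ i : Fin lam, CC p (v i) * Tvar p ^ (i : ℕ) := by
          rw [Finset.smul_sum]
          refine Finset.sum_congr rfl fun i _ => ?_
          rw [Pi.smul_apply, smul_eq_CC_mul, ← mul_assoc, smul_eq_mul, CC, CC, CC,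
            ← map_mul, ← map_mul]
        show Submodule.Quotient.mk (∑ i : Fin lam, CC p ((z • v) i) * Tvar p ^ (i : ℕ))
            = z • Submodule.Quotient.mk (∑ i : Fin lam, CC p (v i) * Tvar p ^ (i : ℕ))
        rw [hsum, Submodule.Quotient.mk_smul] }
  have hsig : ∀ v, sig v
      = Submodule.Quotient.mk (∑ i : Fin lam, CC p (v i) * Tvar p ^ (i : ℕ)) := fun _ => rfl
  -- surjectivity of sig
  have hsig_surj : Function.Surjective sig := by
    intro aa
    obtain ⟨a, rfl⟩ := Submodule.Quotient.mk_surjective JZ aa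
    obtain ⟨Qe, We, ρ, hdiv⟩ := division lam g a
    refine ⟨ρ, ?_⟩
    rw [hsig, Submodule.Quotient.eq, hdiv]
    rw [show (∑ i : Fin lam, CC p (ρ i) * Tvar p ^ (i : ℕ))
        - (Qe * fEl p lam g + Svar p * We + ∑ i : Fin lam, CC p (ρ i) * Tvar p ^ (i : ℕ))
        = -(Qe * fEl p lam g + Svar p * We) by ring]
    refine Submodule.neg_mem _ ?_
    rw [hJZdef, Submodule.restrictScalars_mem, hJdef]
    refine Submodule.add_mem _ ?_ ?_
    · exact Submodule.mem_sup_left (Ideal.mem_span_singleton'.mpr ⟨Qe, rfl⟩)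
    · exact Submodule.mem_sup_right (Ideal.mem_span_singleton'.mpr ⟨We, by rw [mul_comm]⟩)
  -- surjectivity of piJ ∘ sig
  have hps_surj : Function.Surjective (piJ ∘ₗ sig) := by
    intro qq
    obtain ⟨m, rfl⟩ := Submodule.Quotient.mk_surjective SM qq
    have hmx : ∃ a : Lambda p, a • x = m := by
      have : m ∈ Submodule.span (Lambda p) {x} := by rw [hx]; exact Submodule.mem_top
      obtain ⟨a, ha⟩ := Submodule.mem_span_singleton.mp this
      exact ⟨a, ha⟩
    obtain ⟨a, rfl⟩ := hmx
    obtain ⟨v, hv⟩ := hsig_surj (Submodule.Quotient.mk a)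
    exact ⟨v, by rw [LinearMap.comp_apply, hv, Submodule.liftQ_apply, htoQ]⟩
  -- the endomorphism
  let E : (Fin lam → ℤ_[p]) →ₗ[ℤ_[p]] (Fin lam → ℤ_[p]) :=
    (bQ.equivFun : (M ⧸ SM) ≃ₗ[ℤ_[p]] (Fin lam → ℤ_[p])).toLinearMap ∘ₗ (piJ ∘ₗ sig)
  have hE_surj : Function.Surjective E := by
    intro v
    obtain ⟨w, hw⟩ := hps_surj (bQ.equivFun.symm v)
    refine ⟨w, ?_⟩
    show bQ.equivFun ((piJ ∘ₗ sig) w) = v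
    rw [hw]
    exact bQ.equivFun.apply_symm_apply v
  have hE_inj : Function.Injective E :=
    IsNoetherian.injective_of_surjective_endomorphism E hE_surj
  -- injectivity of piJ
  have hpiJ_inj : ∀ aa : Lambda p ⧸ JZ, piJ aa = 0 → aa = 0 := by
    intro aa haa
    obtain ⟨v, rfl⟩ := hsig_surj aa
    have : E v = 0 := by
      simp only [E, LinearMap.comp_apply, LinearEquiv.coe_coe]
      rw [show piJ (sig v) = 0 from haa, map_zero]
    have hv0 : v = 0 := hE_inj (by rw [this, map_zero])
    rw [hv0, map_zero]
  -- key division step for elements of the kernel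
  have key : ∀ h : Lambda p, h • x = 0 → ∃ cu : Lambda p × Lambda p,
      cu.2 • x = 0 ∧ h = cu.1 * f + Svar p * cu.2 := by
    intro h hh
    have h0 : piJ (Submodule.Quotient.mk h) = 0 := by
      rw [Submodule.liftQ_apply, htoQ, hh, Submodule.Quotient.mk_eq_zero]
      exact Submodule.zero_mem _
    have hmem : h ∈ JZ := by
      have := hpiJ_inj _ h0
      rwa [Submodule.Quotient.mk_eq_zero] at this
    rw [hJZdef, Submodule.restrictScalars_mem, hJdef] at hmem
    obtain ⟨u, hu, v, hv, huv⟩ := Submodule.mem_sup.mp hmem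
    obtain ⟨c, rfl⟩ := Ideal.mem_span_singleton'.mp hu
    obtain ⟨c', rfl⟩ := Ideal.mem_span_singleton'.mp hv
    have hux : Svar p • (c' • x) = 0 := by
      have h1 : (c * f + c' * Svar p) • x = 0 := by rw [huv]; exact hh
      rw [add_smul, mul_smul, hannF, smul_zero, zero_add, mul_comm, mul_smul] at h1
      exact h1
    refine ⟨(c, c'), htf _ hux, ?_⟩
    rw [← huv, mul_comm c' (Svar p)]
  -- iterate the division step S-adically
  choose FF hFF using key
  have hker_dvd : ∀ h : Lambda p, h • x = 0 → f ∣ h := by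
    intro h hh
    let zs : ℕ → {z : Lambda p // z • x = 0} := fun k =>
      Nat.rec ⟨h, hh⟩ (fun _ prev => ⟨(FF prev.1 prev.2).2, (hFF prev.1 prev.2).1⟩) k
    let cs : ℕ → Lambda p := fun k => (FF (zs k).1 (zs k).2).1
    have hrec : ∀ k, (zs k).1 = cs k * f + Svar p * (zs (k + 1)).1 :=
      fun k => (hFF (zs k).1 (zs k).2).2
    have h0 := Csum_geom f (fun k => (zs k).1) cs hrec
    exact ⟨Csum cs, by rw [mul_comm]; exact h0⟩
  -- conclude
  let phi : Lambda p →ₗ[Lambda p] M := LinearMap.toSpanSingleton (Lambda p) M x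
  have hphi_surj : Function.Surjective phi := by
    rw [← LinearMap.range_eq_top, ← LinearMap.span_singleton_eq_range]
    exact hx
  have hker : LinearMap.ker phi = (Ideal.span {f} : Ideal (Lambda p)) := by
    ext h
    rw [LinearMap.mem_ker]
    constructor
    · intro hh
      exact Ideal.mem_span_singleton.mpr
        (hker_dvd h (by rw [← LinearMap.toSpanSingleton_apply]; exact hh))
    · intro hh
      obtain ⟨c, rfl⟩ := Ideal.mem_span_singleton.mp hh
      show (f * c) • x = 0
      rw [mul_smul]
      exact hannF (c • x)
  exact ⟨(LinearMap.quotKerEquivOfSurjective phi hphi_surj).symm.trans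
    (Submodule.quotEquivOfEq _ _ hker)⟩
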